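/- Let n ≥ 1, let V and O be Hermitian n × n complex matrices, and let ρ be a positive semidefinite n × n complex matrix with Tr(ρ) = 1. Then the function f : ℝ → ℂ defined by f(x) = Tr( exp(−i x V) · ρ · exp(i x V) · O ) is Lipschitz with constant 2‖V‖_F ‖O‖_F, i.e., |f(x) − f(y)| ≤ 2‖V‖_F ‖O‖_F |x − y| for all x, y ∈ ℝ, where ‖·‖_F denotes the Frobenius norm and exp is the matrix exponential. -/

import Mathlib

open Matrix
open scoped ComplexOrder

/-- The Frobenius norm of a complex matrix. -/
noncomputable def frobNorm {n : ℕ} (A : Matrix (Fin n) (Fin n) ℂ) : ℝ :=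
  Real.sqrt (∑ i, ∑ j, ‖A i j‖ ^ 2)

variable {n : ℕ}

lemma frobNorm_nonneg (A : Matrix (Fin n) (Fin n) ℂ) : 0 ≤ frobNorm A := Real.sqrt_nonneg _

section inst
attribute [local instance] Matrix.frobeniusSeminormedAddCommGroup Matrix.frobeniusNormedAddCommGroup
  Matrix.frobeniusNormedSpace Matrix.frobeniusNormedRing Matrix.frobeniusNormedAlgebra

lemma frobNorm_eq_norm (A : Matrix (Fin n) (Fin n) ℂ) : frobNorm A = ‖A‖ := by
  rw [Matrix.frobenius_norm_def, frobNorm, Real.sqrt_eq_rpow]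
  congr 1
  refine Finset.sum_congr rfl fun i _ => Finset.sum_congr rfl fun j _ => ?_
  rw [Real.rpow_two]

lemma frobNorm_mul_le (A B : Matrix (Fin n) (Fin n) ℂ) :
    frobNorm (A * B) ≤ frobNorm A * frobNorm B := by
  simp only [frobNorm_eq_norm]
  exact norm_mul_le A B

lemma frobNorm_smul (c : ℂ) (A : Matrix (Fin n) (Fin n) ℂ) :
    frobNorm (c • A) = ‖c‖ * frobNorm A := by
  simp only [frobNorm_eq_norm]
  rw [norm_smul]

end inst

lemma abs_trace_mul_le (A B : Matrix (Fin n) (Fin n) ℂ) :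
    ‖(A * B).trace‖ ≤ frobNorm A * frobNorm B := by
  have hfro : ∀ M : Matrix (Fin n) (Fin n) ℂ,
      frobNorm M = Real.sqrt (∑ p : Fin n × Fin n, ‖M p.1 p.2‖ ^ 2) := by
    intro M
    rw [frobNorm, ← Finset.sum_product']
    rfl
  calc ‖(A * B).trace‖
      = ‖∑ i, ∑ j, A i j * B j i‖ := by
        simp only [Matrix.trace, Matrix.diag, Matrix.mul_apply]
    _ ≤ ∑ i, ∑ j, ‖A i j * B j i‖ :=
        (norm_sum_le _ _).trans (Finset.sum_le_sum fun i _ => norm_sum_le _ _)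
    _ = ∑ p : Fin n × Fin n, ‖A p.1 p.2‖ * ‖B p.2 p.1‖ := by
        rw [← Finset.sum_product']
        simp [_root_.map_mul]
    _ ≤ Real.sqrt (∑ p : Fin n × Fin n, ‖A p.1 p.2‖ ^ 2) *
        Real.sqrt (∑ p : Fin n × Fin n, ‖B p.2 p.1‖ ^ 2) :=
        Real.sum_mul_le_sqrt_mul_sqrt _ _ _
    _ = frobNorm A * frobNorm B := by
      rw [hfro A, hfro B]
      congr 2
      exact Fintype.sum_equiv (Equiv.prodComm _ _) _ _ (fun p => rfl)

lemma trace_conjTranspose_mul (A : Matrix (Fin n) (Fin n) ℂ) :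
    (Aᴴ * A).trace = ((∑ i, ∑ j, ‖A i j‖ ^ 2 : ℝ) : ℂ) := by
  rw [Matrix.trace]
  push_cast
  rw [Finset.sum_comm]
  refine Finset.sum_congr rfl fun i _ => ?_
  rw [Matrix.diag_apply, Matrix.mul_apply]
  refine Finset.sum_congr rfl fun j _ => ?_
  rw [Matrix.conjTranspose_apply]
  calc star (A j i) * A j i = A j i * (starRingEnd ℂ) (A j i) := mul_comm _ _
    _ = ((Complex.normSq (A j i) : ℝ) : ℂ) := Complex.mul_conj _
    _ = ((‖A j i‖ : ℝ) : ℂ) ^ 2 := by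
        rw [Complex.normSq_eq_norm_sq]; push_cast; ring

lemma frobNorm_eq_sqrt_trace (A : Matrix (Fin n) (Fin n) ℂ) :
    frobNorm A = Real.sqrt ((Aᴴ * A).trace.re) := by
  rw [frobNorm, trace_conjTranspose_mul, Complex.ofReal_re]

lemma frobNorm_unitary_left {U : Matrix (Fin n) (Fin n) ℂ} (hU : Uᴴ * U = 1)
    (A : Matrix (Fin n) (Fin n) ℂ) : frobNorm (U * A) = frobNorm A := by
  rw [frobNorm_eq_sqrt_trace, frobNorm_eq_sqrt_trace]
  congr 2
  rw [Matrix.conjTranspose_mul, Matrix.mul_assoc, ← Matrix.mul_assoc Uᴴ, hU, Matrix.one_mul]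

lemma frobNorm_unitary_right {U : Matrix (Fin n) (Fin n) ℂ} (hU : U * Uᴴ = 1)
    (A : Matrix (Fin n) (Fin n) ℂ) : frobNorm (A * U) = frobNorm A := by
  rw [frobNorm_eq_sqrt_trace, frobNorm_eq_sqrt_trace]
  congr 2
  rw [Matrix.conjTranspose_mul, Matrix.mul_assoc, ← Matrix.mul_assoc Aᴴ,
    Matrix.trace_mul_comm, Matrix.mul_assoc, hU, Matrix.mul_one, Matrix.trace_mul_comm]

lemma frobNorm_diagonal (d : Fin n → ℂ) :
    frobNorm (Matrix.diagonal d) = Real.sqrt (∑ i, ‖d i‖ ^ 2) := by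
  rw [frobNorm]
  congr 1
  refine Finset.sum_congr rfl fun i _ => ?_
  rw [Finset.sum_eq_single i]
  · rw [Matrix.diagonal_apply_eq]
  · intro j _ hj
    rw [Matrix.diagonal_apply_ne' _ hj, norm_zero]
    norm_num
  · simp

lemma frobNorm_rho_le_one {ρ : Matrix (Fin n) (Fin n) ℂ}
    (hρ : ρ.PosSemidef) (hρtr : ρ.trace = 1) : frobNorm ρ ≤ 1 := by
  have h := hρ.1
  set U : Matrix (Fin n) (Fin n) ℂ := (Matrix.IsHermitian.eigenvectorUnitary h : Matrix (Fin n) (Fin n) ℂ)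
  have hU1 : Uᴴ * U = 1 := by
    simpa [Matrix.star_eq_conjTranspose] using
      (Matrix.mem_unitaryGroup_iff'.mp (Matrix.IsHermitian.eigenvectorUnitary h).2)
  have hU2 : U * Uᴴ = 1 := by
    simpa [Matrix.star_eq_conjTranspose] using
      (Matrix.mem_unitaryGroup_iff.mp (Matrix.IsHermitian.eigenvectorUnitary h).2)
  have hspec := Matrix.IsHermitian.spectral_theorem h
  set D : Matrix (Fin n) (Fin n) ℂ :=
    Matrix.diagonal (RCLike.ofReal ∘ h.eigenvalues) with hD
  have hρeq : ρ = U * D * Uᴴ := by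
    simpa [Matrix.star_eq_conjTranspose] using hspec
  -- trace of D equals 1
  have htrD : D.trace = 1 := by
    have : ρ.trace = D.trace := by
      rw [hρeq, Matrix.trace_mul_cycle, hU1, Matrix.one_mul]
    rw [← this, hρtr]
  have hsum : ∑ i, h.eigenvalues i = 1 := by
    have : ((∑ i, h.eigenvalues i : ℝ) : ℂ) = 1 := by
      rw [← htrD, hD, Matrix.trace_diagonal]
      push_cast
      rfl
    exact_mod_cast this
  have hnonneg : ∀ i, 0 ≤ h.eigenvalues i := fun i => hρ.eigenvalues_nonneg i
  have hle1 : ∀ i, h.eigenvalues i ≤ 1 := by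
    intro i
    rw [← hsum]
    exact Finset.single_le_sum (fun j _ => hnonneg j) (Finset.mem_univ i)
  have hU3 : Uᴴ * Uᴴᴴ = 1 := by rw [Matrix.conjTranspose_conjTranspose]; exact hU1
  have : frobNorm ρ = frobNorm D := by
    rw [hρeq, frobNorm_unitary_right hU3, frobNorm_unitary_left hU1]
  rw [this, hD, frobNorm_diagonal]
  rw [show (1 : ℝ) = Real.sqrt 1 from (Real.sqrt_one).symm]
  refine Real.sqrt_le_sqrt ?_
  calc ∑ i, ‖(RCLike.ofReal ∘ h.eigenvalues) i‖ ^ 2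
      = ∑ i, (h.eigenvalues i) ^ 2 := by
        refine Finset.sum_congr rfl fun i _ => ?_
        simp [abs_of_nonneg (hnonneg i)]
    _ ≤ ∑ i, h.eigenvalues i := by
        refine Finset.sum_le_sum fun i _ => ?_
        nlinarith [hnonneg i, hle1 i]
    _ = 1 := hsum

section deriv
attribute [local instance] Matrix.frobeniusSeminormedAddCommGroup Matrix.frobeniusNormedAddCommGroup
  Matrix.frobeniusNormedSpace Matrix.frobeniusNormedRing Matrix.frobeniusNormedAlgebra

noncomputable instance matCompl : CompleteSpace (Matrix (Fin n) (Fin n) ℂ) :=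
  inferInstance

lemma exp_hasDerivAt (A : Matrix (Fin n) (Fin n) ℂ) (t : ℝ) :
    HasDerivAt (fun u : ℝ => NormedSpace.exp (((u : ℝ) : ℂ) • A))
      (A * NormedSpace.exp (((t : ℝ) : ℂ) • A)) t := by
  have hs : ∀ u : ℝ, ((u : ℂ)) • A = (u : ℝ) • A := by
    intro u
    rw [← algebraMap_smul ℂ u A, Complex.coe_algebraMap]
  simp only [hs]
  exact hasDerivAt_exp_smul_const' (𝕂 := ℝ) A t

/-- trace as a continuous linear map -/
noncomputable def traceCLM : Matrix (Fin n) (Fin n) ℂ →L[ℂ] ℂ :=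
  LinearMap.toContinuousLinearMap (Matrix.traceLinearMap (Fin n) ℂ ℂ)

lemma trace_hasDerivAt (A B ρ O : Matrix (Fin n) (Fin n) ℂ) (t : ℝ) :
    HasDerivAt (fun u : ℝ =>
        (NormedSpace.exp (((u : ℝ) : ℂ) • A) * ρ * NormedSpace.exp (((u : ℝ) : ℂ) • B)
          * O).trace)
      (((A * NormedSpace.exp (((t : ℝ) : ℂ) • A) * ρ * NormedSpace.exp (((t : ℝ) : ℂ) • B) +
         NormedSpace.exp (((t : ℝ) : ℂ) • A) * ρ *
          (B * NormedSpace.exp (((t : ℝ) : ℂ) • B))) * O).trace) t := by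
  have h1 := (((exp_hasDerivAt A t).mul_const ρ).mul (exp_hasDerivAt B t)).mul_const O
  exact ((traceCLM (n := n)).restrictScalars ℝ).hasFDerivAt.comp_hasDerivAt t h1

end deriv

lemma exp_pair_one (A : Matrix (Fin n) (Fin n) ℂ) :
    NormedSpace.exp A * NormedSpace.exp (-A) = 1 ∧
      NormedSpace.exp (-A) * NormedSpace.exp A = 1 := by
  constructor
  · rw [← Matrix.exp_add_of_commute A (-A) (Commute.neg_right (Commute.refl A)),
      add_neg_cancel, NormedSpace.exp_zero]
  · rw [← Matrix.exp_add_of_commute (-A) A (Commute.neg_left (Commute.refl A)),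
      neg_add_cancel, NormedSpace.exp_zero]


/-- the expected reward `μ(x) = Tr(exp(−ixV) ρ exp(ixV) O)` of a
parameterized quantum circuit with Hermitian generator `V`, Hermitian observable `O` and
state `ρ` (PSD, trace one) is Lipschitz in `x` with constant `2‖V‖_F ‖O‖_F`. -/
theorem stmt_16 (n : ℕ) (hn : 1 ≤ n) (V O ρ : Matrix (Fin n) (Fin n) ℂ)
    (hV : V.IsHermitian) (hO : O.IsHermitian)
    (hρ : ρ.PosSemidef) (hρtr : ρ.trace = 1) :
    ∀ x y : ℝ, ‖
        ((NormedSpace.exp ((-(Complex.I * x)) • V) * ρ *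
            NormedSpace.exp ((Complex.I * x) • V) * O).trace -
         (NormedSpace.exp ((-(Complex.I * y)) • V) * ρ *
            NormedSpace.exp ((Complex.I * y) • V) * O).trace)‖
      ≤ 2 * frobNorm V * frobNorm O * |x - y| := by
  intro x y
  set A : Matrix (Fin n) (Fin n) ℂ := (-Complex.I) • V with hA
  set B : Matrix (Fin n) (Fin n) ℂ := Complex.I • V with hB
  have key1 : ∀ t : ℝ, (-(Complex.I * t)) • V = ((t : ℝ) : ℂ) • A := by
    intro t; rw [hA, smul_smul]; congr 1; ring
  have key2 : ∀ t : ℝ, ((Complex.I * t)) • V = ((t : ℝ) : ℂ) • B := by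
    intro t; rw [hB, smul_smul]; congr 1; ring
  rw [key1 x, key1 y, key2 x, key2 y]
  -- notation
  set U : ℝ → Matrix (Fin n) (Fin n) ℂ :=
    fun t => NormedSpace.exp (((t : ℝ) : ℂ) • A) with hU
  set W : ℝ → Matrix (Fin n) (Fin n) ℂ :=
    fun t => NormedSpace.exp (((t : ℝ) : ℂ) • B) with hW
  -- algebraic facts
  have hBnegA : B = -A := by rw [hA, hB, neg_smul, neg_neg]
  have hsmulneg : ∀ t : ℝ, ((t : ℝ) : ℂ) • B = -(((t : ℝ) : ℂ) • A) := by
    intro t; rw [hBnegA, smul_neg]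
  have hUW : ∀ t : ℝ, U t * W t = 1 := by
    intro t; rw [hU, hW]; simp only [hsmulneg t]
    exact (exp_pair_one _).1
  have hWU : ∀ t : ℝ, W t * U t = 1 := by
    intro t; rw [hU, hW]; simp only [hsmulneg t]
    exact (exp_pair_one _).2
  have hABstar : Aᴴ = B := by
    rw [hA, hB, Matrix.conjTranspose_smul, hV.eq]
    simp
  have hBAstar : Bᴴ = A := by
    rw [hA, hB, Matrix.conjTranspose_smul, hV.eq]
    simp
  have hUstar : ∀ t : ℝ, (U t)ᴴ = W t := by
    intro t
    rw [hU, hW, ← Matrix.exp_conjTranspose]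
    congr 1
    rw [Matrix.conjTranspose_smul, hABstar, Complex.star_def, Complex.conj_ofReal]
  have hWstar : ∀ t : ℝ, (W t)ᴴ = U t := by
    intro t
    rw [hW, hU, ← Matrix.exp_conjTranspose]
    congr 1
    rw [Matrix.conjTranspose_smul, hBAstar, Complex.star_def, Complex.conj_ofReal]
  -- frobenius norm facts
  have hUleft : ∀ t (X : Matrix (Fin n) (Fin n) ℂ), frobNorm (U t * X) = frobNorm X := by
    intro t X
    refine frobNorm_unitary_left ?_ X
    rw [hUstar t]; exact hWU t
  have hWright : ∀ t (X : Matrix (Fin n) (Fin n) ℂ), frobNorm (X * W t) = frobNorm X := by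
    intro t X
    refine frobNorm_unitary_right ?_ X
    rw [hWstar t]; exact hWU t
  have hρ1 : frobNorm ρ ≤ 1 := frobNorm_rho_le_one hρ hρtr
  have hAV : frobNorm A = frobNorm V := by
    rw [hA, frobNorm_smul]; simp
  have hBV : frobNorm B = frobNorm V := by
    rw [hB, frobNorm_smul]; simp
  have hVnn := frobNorm_nonneg V
  have hOnn := frobNorm_nonneg O
  -- the function and its derivative
  set g : ℝ → ℂ := fun t => (U t * ρ * W t * O).trace with hg
  set g' : ℝ → ℂ := fun t =>
    ((A * U t * ρ * W t + U t * ρ * (B * W t)) * O).trace with hg'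
  have hderiv : ∀ t : ℝ, HasDerivAt g (g' t) t := fun t => trace_hasDerivAt A B ρ O t
  -- bound on the derivative
  have hbound : ∀ t : ℝ, ‖g' t‖ ≤ 2 * frobNorm V * frobNorm O := by
    intro t
    rw [hg']
    calc ‖((A * U t * ρ * W t + U t * ρ * (B * W t)) * O).trace‖
        = ‖((A * U t * ρ * W t) * O).trace + ((U t * ρ * (B * W t)) * O).trace‖ := by
          rw [add_mul, Matrix.trace_add]
      _ ≤ ‖((A * U t * ρ * W t) * O).trace‖
            + ‖((U t * ρ * (B * W t)) * O).trace‖ := norm_add_le _ _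
      _ ≤ frobNorm (A * U t * ρ * W t) * frobNorm O
            + frobNorm (U t * ρ * (B * W t)) * frobNorm O := by
          gcongr <;> exact abs_trace_mul_le _ _
      _ ≤ (frobNorm V * 1) * frobNorm O + (1 * frobNorm V) * frobNorm O := by
          gcongr ?_ * frobNorm O + ?_ * frobNorm O
          · rw [hWright t, Matrix.mul_assoc]
            refine (frobNorm_mul_le _ _).trans ?_
            rw [hUleft t, hAV]
            exact mul_le_mul_of_nonneg_left hρ1 hVnn
          · rw [show U t * ρ * (B * W t) = ((U t * (ρ * B)) * W t) by
              rw [Matrix.mul_assoc, Matrix.mul_assoc, Matrix.mul_assoc]]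
            rw [hWright t, hUleft t]
            refine (frobNorm_mul_le _ _).trans ?_
            rw [hBV]
            exact mul_le_mul_of_nonneg_right hρ1 hVnn
      _ = 2 * frobNorm V * frobNorm O := by ring
  -- mean value inequality
  have hmvt := Convex.norm_image_sub_le_of_norm_hasDerivWithin_le
    (f := g) (f' := g') (C := 2 * frobNorm V * frobNorm O) (s := Set.univ)
    (fun t _ => (hderiv t).hasDerivWithinAt) (fun t _ => hbound t) convex_univ
    (Set.mem_univ y) (Set.mem_univ x)
  calc ‖g x - g y‖ = ‖g x - g y‖ := rfl
    _ ≤ 2 * frobNorm V * frobNorm O * ‖x - y‖ := hmvt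
    _ = 2 * frobNorm V * frobNorm O * |x - y| := by rw [Real.norm_eq_abs]
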